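/- Let V be a finite-dimensional real vector space with a nondegenerate quadratic form q of signature (1, m), let h be a parabolic isometry of (V, q), and let W ⊆ V be an h-invariant linear subspace such that the restriction of q to W is nondegenerate and indefinite (q takes both positive and negative values on W). Then the restriction of h to W is a parabolic isometry of (W, q|_W). -/

import Mathlib

open Module

section aux
open TensorProduct Complex QuadraticMap

-- transfer lemma
lemma aux_eig_transfer {V : Type*} [AddCommGroup V] [Module ℝ V]
    (h : V →ₗ[ℝ] V) (P : Submodule ℝ V) (hP : ∀ x ∈ P, h x ∈ P) (μ : ℂ)
    (hev : Module.End.HasEigenvalue (LinearMap.baseChange ℂ (h.restrict hP)) μ) :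
    Module.End.HasEigenvalue (LinearMap.baseChange ℂ h) μ := by
  obtain ⟨y, hy1, hy2⟩ := hev.exists_hasEigenvector
  set ι := LinearMap.baseChange ℂ P.subtype with hι
  have hinj : Function.Injective ι := by
    rw [hι]
    have : Function.Injective (LinearMap.lTensor ℂ P.subtype) :=
      Module.Flat.lTensor_preserves_injective_linearMap _ P.injective_subtype
    intro a b hab
    apply this
    simpa [← LinearMap.baseChange_eq_ltensor] using hab
  have hcomm : ∀ z, LinearMap.baseChange ℂ h (ι z) = ι (LinearMap.baseChange ℂ (h.restrict hP) z) := by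
    intro z
    have : (LinearMap.baseChange ℂ h).comp ι = ι.comp (LinearMap.baseChange ℂ (h.restrict hP)) := by
      rw [hι, ← LinearMap.baseChange_comp, ← LinearMap.baseChange_comp]
      congr 1
    exact DFunLike.congr_fun this z
  apply Module.End.hasEigenvalue_of_hasEigenvector (x := ι y)
  constructor
  · rw [Module.End.mem_eigenspace_iff]
    rw [Module.End.mem_eigenspace_iff] at hy1
    rw [hcomm, hy1, _root_.map_smul]
  · intro hz
    exact hy2 (hinj (by simpa using hz))

section L4
variable {U : Type*} [AddCommGroup U] [Module ℝ U] [FiniteDimensional ℝ U]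

noncomputable def rForm : LinearMap.BilinForm ℝ ℂ :=
  LinearMap.mk₂ ℝ (fun c d => c.re * d.re + c.im * d.im)
    (by intros; simp [Complex.add_re, Complex.add_im]; ring)
    (by intros; simp [Complex.smul_re, Complex.smul_im]; ring)
    (by intros; simp [Complex.add_re, Complex.add_im]; ring)
    (by intros; simp [Complex.smul_re, Complex.smul_im]; ring)

noncomputable def phiForm (K : LinearMap.BilinForm ℝ U) :
    LinearMap.BilinForm ℝ (ℂ ⊗[ℝ] U) :=
  LinearMap.BilinForm.tensorDistrib ℝ ℝ (rForm ⊗ₜ K)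

lemma phiForm_tmul (K : LinearMap.BilinForm ℝ U) (c d : ℂ) (u v : U) :
    phiForm K (c ⊗ₜ u) (d ⊗ₜ v) = (c.re * d.re + c.im * d.im) * K u v := by
  simp [phiForm, rForm, mul_comm]

lemma bilin_ext {B₁ B₂ : LinearMap.BilinForm ℝ (ℂ ⊗[ℝ] U)}
    (H : ∀ c u d v, B₁ (c ⊗ₜ u) (d ⊗ₜ v) = B₂ (c ⊗ₜ u) (d ⊗ₜ v)) : B₁ = B₂ := by
  apply TensorProduct.ext'
  intro c u
  apply TensorProduct.ext'
  intro d v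
  exact H c u d v

set_option linter.unusedSectionVars false

variable (K : LinearMap.BilinForm ℝ U)

lemma phiForm_symm (hK : ∀ u v, K u v = K v u) (z w : ℂ ⊗[ℝ] U) :
    phiForm K z w = phiForm K w z := by
  have hr : LinearMap.IsSymm rForm := by
    refine ⟨fun c d => ?_⟩
    simp only [RingHom.id_apply, rForm, LinearMap.mk₂_apply]
    ring
  have hKs : LinearMap.IsSymm K := ⟨fun u v => by simpa using hK u v⟩
  have := (LinearMap.IsSymm.tmul hr hKs).eq z w
  simpa [phiForm] using this

lemma phiForm_smul_I (z w : ℂ ⊗[ℝ] U) :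
    phiForm K (Complex.I • z) (Complex.I • w) = phiForm K z w := by
  have : ((phiForm K).compl₁₂
      ((LinearMap.lsmul ℂ (ℂ ⊗[ℝ] U) Complex.I).restrictScalars ℝ)
      ((LinearMap.lsmul ℂ (ℂ ⊗[ℝ] U) Complex.I).restrictScalars ℝ)) = phiForm K := by
    apply bilin_ext
    intro c u d v
    simp only [LinearMap.compl₁₂_apply, LinearMap.coe_restrictScalars, LinearMap.lsmul_apply,
      TensorProduct.smul_tmul']
    rw [phiForm_tmul, phiForm_tmul]
    simp only [smul_eq_mul, Complex.mul_re, Complex.mul_im, Complex.I_re, Complex.I_im]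
    ring
  have h2 := LinearMap.congr_fun (LinearMap.congr_fun this z) w
  simpa using h2

lemma phiForm_I_left (z w : ℂ ⊗[ℝ] U) :
    phiForm K (Complex.I • z) w = - phiForm K z (Complex.I • w) := by
  have : ((phiForm K).compl₁₂
      ((LinearMap.lsmul ℂ (ℂ ⊗[ℝ] U) Complex.I).restrictScalars ℝ)
      (LinearMap.id)) = - ((phiForm K).compl₁₂ (LinearMap.id)
      ((LinearMap.lsmul ℂ (ℂ ⊗[ℝ] U) Complex.I).restrictScalars ℝ)) := by
    apply bilin_ext
    intro c u d v
    simp only [LinearMap.compl₁₂_apply, LinearMap.coe_restrictScalars, LinearMap.lsmul_apply,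
      TensorProduct.smul_tmul', LinearMap.id_coe, id_eq, LinearMap.neg_apply]
    rw [phiForm_tmul, phiForm_tmul]
    simp only [smul_eq_mul, Complex.mul_re, Complex.mul_im, Complex.I_re, Complex.I_im]
    ring
  have h2 := LinearMap.congr_fun (LinearMap.congr_fun this z) w
  simpa using h2

lemma phiForm_smul (μ : ℂ) (z w : ℂ ⊗[ℝ] U) :
    phiForm K (μ • z) (μ • w) = (μ.re * μ.re + μ.im * μ.im) * phiForm K z w := by
  have hz : ∀ y : ℂ ⊗[ℝ] U, μ • y = μ.re • y + μ.im • (Complex.I • y) := by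
    intro y
    have hm : μ = (μ.re : ℂ) + μ.im • Complex.I := by
      simp [Complex.real_smul, Complex.ext_iff]
    nth_rewrite 1 [hm]
    rw [add_smul, smul_assoc, Complex.coe_smul]
    rfl
  rw [hz z, hz w]
  have hIl := phiForm_I_left K
  have hII := phiForm_smul_I K
  simp only [map_add, _root_.map_smul, LinearMap.add_apply, LinearMap.smul_apply, smul_eq_mul]
  rw [hII]
  have h1 : phiForm K z (Complex.I • w) + phiForm K (Complex.I • z) w = 0 := by
    rw [hIl]; ring
  linear_combination (μ.re * μ.im) * h1

noncomputable def reT : ℂ ⊗[ℝ] U →ₗ[ℝ] U :=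
  (TensorProduct.lid ℝ U).toLinearMap ∘ₗ (LinearMap.rTensor U Complex.reLm)

noncomputable def imT : ℂ ⊗[ℝ] U →ₗ[ℝ] U :=
  (TensorProduct.lid ℝ U).toLinearMap ∘ₗ (LinearMap.rTensor U Complex.imLm)

lemma reT_imT_decomp (z : ℂ ⊗[ℝ] U) :
    (1 : ℂ) ⊗ₜ[ℝ] (reT z) + Complex.I ⊗ₜ[ℝ] (imT z) = z := by
  have : ((TensorProduct.mk ℝ ℂ U 1) ∘ₗ (reT (U := U)))
      + ((TensorProduct.mk ℝ ℂ U Complex.I) ∘ₗ (imT (U := U))) = LinearMap.id := by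
    apply TensorProduct.ext'
    intro c u
    simp only [LinearMap.add_apply, LinearMap.coe_comp, Function.comp_apply, reT, imT,
      LinearMap.rTensor_tmul, LinearEquiv.coe_coe, TensorProduct.lid_tmul,
      TensorProduct.mk_apply, LinearMap.id_coe, id_eq, Complex.reLm_coe, Complex.imLm_coe]
    rw [TensorProduct.tmul_smul, TensorProduct.tmul_smul, smul_tmul', smul_tmul']
    rw [← TensorProduct.add_tmul]
    congr 1
    simp [Complex.real_smul, Complex.ext_iff]
  exact LinearMap.congr_fun this z

lemma phiForm_pos (hK : ∀ u : U, u ≠ 0 → 0 < K u u) (hK0 : K 0 = 0)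
    (z : ℂ ⊗[ℝ] U) (hz : z ≠ 0) : 0 < phiForm K z z := by
  set a := reT z with ha
  set bb := imT z with hb
  have hd := reT_imT_decomp (U := U) z
  have hKnn : ∀ u : U, 0 ≤ K u u := by
    intro u
    rcases eq_or_ne u 0 with rfl | hu
    · simp [hK0]
    · exact (hK u hu).le
  have hexp : phiForm K z z = K a a + K bb bb := by
    rw [← hd, ← ha, ← hb]
    simp only [map_add, LinearMap.add_apply]
    rw [phiForm_tmul, phiForm_tmul, phiForm_tmul, phiForm_tmul]
    simp [Complex.I_re, Complex.I_im]
  rw [hexp]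
  have : a ≠ 0 ∨ bb ≠ 0 := by
    by_contra hc
    push_neg at hc
    apply hz
    rw [← hd, ← ha, ← hb, hc.1, hc.2]
    simp
  rcases this with h1 | h1
  · have := hK a h1; have := hKnn bb; linarith
  · have := hK bb h1; have := hKnn a; linarith

lemma phiForm_baseChange_invariant (g : U →ₗ[ℝ] U) (hg : ∀ u v, K (g u) (g v) = K u v)
    (z w : ℂ ⊗[ℝ] U) :
    phiForm K (LinearMap.baseChange ℂ g z) (LinearMap.baseChange ℂ g w) = phiForm K z w := by
  have : ((phiForm K).compl₁₂
      ((LinearMap.baseChange ℂ g).restrictScalars ℝ)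
      ((LinearMap.baseChange ℂ g).restrictScalars ℝ)) = phiForm K := by
    apply bilin_ext
    intro c u d v
    simp only [LinearMap.compl₁₂_apply, LinearMap.coe_restrictScalars,
      LinearMap.baseChange_tmul]
    rw [phiForm_tmul, phiForm_tmul, hg]
  have h2 := LinearMap.congr_fun (LinearMap.congr_fun this z) w
  simpa using h2

lemma aux_L4 (g : U →ₗ[ℝ] U) (hg : ∀ u v, K (g u) (g v) = K u v)
    (hKsymm : ∀ u v, K u v = K v u)
    (hKpos : ∀ u : U, u ≠ 0 → 0 < K u u)
    (heig1 : ∀ μ : ℂ, Module.End.HasEigenvalue (LinearMap.baseChange ℂ g) μ →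
      ‖μ‖ = 1) :
    (⨆ μ : ℂ, Module.End.eigenspace (LinearMap.baseChange ℂ g) μ) = ⊤ := by
  set F : Module.End ℂ (ℂ ⊗[ℝ] U) := LinearMap.baseChange ℂ g with hF
  have hK0 : K 0 = 0 := by simp
  -- key step
  have key : ∀ (μ : ℂ) (x : ℂ ⊗[ℝ] U),
      (F - μ • 1) ((F - μ • 1) x) = 0 → (F - μ • 1) x = 0 := by
    intro μ x hxx
    by_contra hy
    set y : ℂ ⊗[ℝ] U := (F - μ • 1) x with hyd
    have hFy : F y = μ • y := by
      have : F y - μ • y = 0 := by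
        simpa [LinearMap.sub_apply, LinearMap.smul_apply] using hxx
      linear_combination (norm := module) this
    have hev : Module.End.HasEigenvalue F μ :=
      Module.End.hasEigenvalue_of_hasEigenvector
        ⟨Module.End.mem_eigenspace_iff.mpr hFy, hy⟩
    have habs : ‖μ‖ = 1 := heig1 μ hev
    have hn : μ.re * μ.re + μ.im * μ.im = 1 := by
      have h0 := Complex.normSq_eq_norm_sq μ
      rw [habs, Complex.normSq_apply] at h0
      simpa using h0
    have hFx : F x = μ • x + y := by
      rw [hyd]
      simp [LinearMap.sub_apply, LinearMap.smul_apply]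
    have inv1 : phiForm K (F x) (F x) = phiForm K x x :=
      phiForm_baseChange_invariant K g hg x x
    have hsm := phiForm_smul K μ
    have hxx' : phiForm K (μ • x) (μ • x) = phiForm K x x := by
      rw [hsm x x, hn]; ring
    have e1 : 2 * phiForm K (μ • x) y + phiForm K y y = 0 := by
      have h1 := inv1
      rw [hFx] at h1
      simp only [map_add, LinearMap.add_apply] at h1
      have hsymm := phiForm_symm K hKsymm y (μ • x)
      linarith [h1, hsymm, hxx']
    have inv3 : phiForm K (F (F x)) (F (F x)) = phiForm K x x := by
      rw [phiForm_baseChange_invariant K g hg, inv1]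
    have hFFx : F (F x) = μ • (μ • x) + μ • y + μ • y := by
      rw [hFx, map_add, _root_.map_smul, hFy, hFx, smul_add]
    have e3 : phiForm K (μ • x) y + phiForm K y y = 0 := by
      have h3 := inv3
      rw [hFFx] at h3
      simp only [map_add, LinearMap.add_apply] at h3
      have hA : phiForm K (μ • (μ • x)) (μ • (μ • x)) = phiForm K x x := by
        rw [hsm (μ • x) (μ • x), hn, hxx']; ring
      have hAB : phiForm K (μ • (μ • x)) (μ • y) = phiForm K (μ • x) y := by
        rw [hsm (μ • x) y, hn]; ring
      have hBA : phiForm K (μ • y) (μ • (μ • x)) = phiForm K (μ • x) y := by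
        rw [phiForm_symm K hKsymm (μ • y) (μ • (μ • x)), hAB]
      have hBB : phiForm K (μ • y) (μ • y) = phiForm K y y := by
        rw [hsm y y, hn]; ring
      linarith [h3, hA, hAB, hBA, hBB]
    have hyy : phiForm K y y = 0 := by linarith [e1, e3]
    exact absurd (phiForm_pos K hKpos hK0 y hy) (by rw [hyy]; exact lt_irrefl 0)
  have step : ∀ (μ : ℂ) (k : ℕ) (x : ℂ ⊗[ℝ] U),
      ((F - μ • 1) ^ k) x = 0 → (F - μ • 1) x = 0 := by
    intro μ k
    induction k with
    | zero =>
      intro x hx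
      simp only [pow_zero, Module.End.one_apply] at hx
      rw [hx]
      simp
    | succ n ih =>
      intro x hx
      rw [pow_succ, Module.End.mul_apply] at hx
      exact key μ x (ih _ hx)
  have hmax : ∀ μ : ℂ, Module.End.maxGenEigenspace F μ = Module.End.eigenspace F μ := by
    intro μ
    apply le_antisymm
    · intro x hx
      obtain ⟨k, hk⟩ := (Module.End.mem_maxGenEigenspace F μ x).mp hx
      have hTx := step μ k x hk
      rw [Module.End.mem_eigenspace_iff]
      have : F x - μ • x = 0 := by
        simpa [LinearMap.sub_apply, LinearMap.smul_apply] using hTx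
      linear_combination (norm := module) this
    · exact Module.End.genEigenspace_le_maximal F μ 1
  calc (⨆ μ : ℂ, Module.End.eigenspace F μ)
      = ⨆ μ : ℂ, Module.End.maxGenEigenspace F μ := by
        simp_rw [hmax]
    _ = ⊤ := Module.End.iSup_maxGenEigenspace_eq_top F

end L4

section geom
variable {V : Type*} [AddCommGroup V] [Module ℝ V] [FiniteDimensional ℝ V]
  {m : ℕ} (q : QuadraticForm ℝ V) (b : Basis (Fin (m + 1)) ℝ V)
  (horth : ∀ i j, i ≠ j → QuadraticMap.polar q (b i) (b j) = 0)

include horth in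
lemma aux_qsum (c : Fin (m + 1) → ℝ) :
    q (∑ i, c i • b i) = ∑ i, (c i)^2 * q (b i) := by
  classical
  rw [QuadraticMap.map_sum]
  have h2 : ∑ ij ∈ Finset.univ.sym2 with ¬ ij.IsDiag,
      Sym2.lift ⟨fun i j => polar q (c i • b i) (c j • b j),
        fun _ _ => polar_comm _ _ _⟩ ij = 0 := by
    apply Finset.sum_eq_zero
    intro ij hij
    rw [Finset.mem_filter] at hij
    induction ij using Sym2.ind with
    | _ i j =>
      have hne : i ≠ j := by
        simpa [Sym2.mk_isDiag_iff] using hij.2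
      simp only [Sym2.lift_mk]
      rw [QuadraticMap.polar_smul_left, QuadraticMap.polar_smul_right, horth i j hne]
      simp
  rw [show (∑ ij ∈ Finset.univ.sym2 with ¬ ij.IsDiag, polarSym2 q (Sym2.map (fun i => c i • b i) ij)) = 0 from (Finset.sum_congr rfl (fun ij _ => by induction ij using Sym2.ind; rfl)).trans h2, add_zero]
  congr 1
  ext i
  rw [QuadraticMap.map_smul]
  simp only [smul_eq_mul, pow_two]

include horth in
lemma aux_qnondeg (hne0 : ∀ i : Fin (m + 1), q (b i) ≠ 0)
    (x : V) (hx : ∀ v, QuadraticMap.polar q x v = 0) : x = 0 := by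
  classical
  have hrepr : ∀ i, b.repr x i = 0 := by
    intro i
    have hx' := hx (b i)
    rw [← b.sum_repr x] at hx'
    have : polar q (∑ j, b.repr x j • b j) (b i)
        = ∑ j, b.repr x j * polar q (b j) (b i) := by
      rw [← QuadraticMap.polarBilin_apply_apply]
      rw [map_sum]
      simp only [LinearMap.sum_apply]
      congr 1
      ext j
      rw [LinearMap.map_smul]
      simp [QuadraticMap.polarBilin_apply_apply]
    rw [this] at hx'
    rw [Finset.sum_eq_single i] at hx'
    · rw [QuadraticMap.polar_self] at hx'
      have : q (b i) ≠ 0 := hne0 i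
      rcases mul_eq_zero.mp hx' with h | h
      · exact h
      · exfalso
        rw [two_smul] at h
        exact hne0 i (by linarith)
    · intro j _ hj
      rw [horth j i hj, mul_zero]
    · intro hi
      exact absurd (Finset.mem_univ i) hi
  have hx0 : b.repr x = 0 := by
    ext i
    simp [hrepr i]
  simpa using b.repr.map_eq_zero_iff.mp hx0

include horth in
lemma aux_L3 (hpos : 0 < q (b 0)) (hneg : ∀ i : Fin (m + 1), i ≠ 0 → q (b i) < 0)
    (x w : V) (hqx : 0 < q x) (hqw : 0 < q w)
    (hortho : QuadraticMap.polar q x w = 0)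
    (hli : LinearIndependent ℝ ![x, w]) : False := by
  classical
  set P : Submodule ℝ V := Submodule.span ℝ {x, w} with hP
  have hrange : Set.range ![x, w] = {x, w} := by
    ext v
    simp [Matrix.range_cons, Matrix.range_empty]
    tauto
  have hfinP : finrank ℝ P = 2 := by
    rw [hP, ← hrange, finrank_span_eq_card hli]
    simp
  -- positive definiteness on P
  have hPpos : ∀ v ∈ P, v ≠ 0 → 0 < q v := by
    intro v hv hv0
    rw [hP, Submodule.mem_span_pair] at hv
    obtain ⟨a, c, rfl⟩ := hv
    have hexp : q (a • x + c • w) = a^2 * q x + c^2 * q w := by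
      have hpol : QuadraticMap.polar q (a • x) (c • w)
          = q (a • x + c • w) - q (a • x) - q (c • w) := rfl
      have hpol2 : QuadraticMap.polar q (a • x) (c • w) = 0 := by
        rw [QuadraticMap.polar_smul_left, QuadraticMap.polar_smul_right, hortho]
        simp
      rw [hpol2] at hpol
      rw [QuadraticMap.map_smul, QuadraticMap.map_smul] at hpol
      simp only [smul_eq_mul] at hpol
      nlinarith [hpol]
    rw [hexp]
    have hac : a ≠ 0 ∨ c ≠ 0 := by
      by_contra hc
      push_neg at hc
      exact hv0 (by rw [hc.1, hc.2]; simp)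
    rcases hac with ha | hc
    · nlinarith [sq_nonneg a, sq_nonneg c, pow_pos (abs_pos.mpr ha) 2, _root_.sq_abs a]
    · nlinarith [sq_nonneg a, sq_nonneg c, pow_pos (abs_pos.mpr hc) 2, _root_.sq_abs c]
  -- negative semidefinite subspace: kernel of coordinate 0
  have hNneg : ∀ v ∈ LinearMap.ker (b.coord 0), q v ≤ 0 := by
    intro v hv
    have hv0 : b.repr v 0 = 0 := by
      simpa [Basis.coord_apply] using hv
    have := aux_qsum q b horth (fun i => b.repr v i)
    rw [b.sum_repr v] at this
    rw [this]
    apply Finset.sum_nonpos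
    intro i _
    rcases eq_or_ne i 0 with rfl | hi
    · rw [hv0]; simp
    · have := hneg i hi
      nlinarith [sq_nonneg (b.repr v i)]
  -- disjointness
  have hdisj : P ⊓ (LinearMap.ker (b.coord 0)) = ⊥ := by
    rw [eq_bot_iff]
    intro v hv
    rcases eq_or_ne v 0 with rfl | hv0
    · simp
    · exfalso
      have h1 := hPpos v hv.1 hv0
      have h2 := hNneg v hv.2
      linarith
  -- dimension count
  have hfinN : finrank ℝ (LinearMap.ker (b.coord 0)) = m := by
    have hsurj : Function.Surjective (b.coord 0) := by
      intro r
      exact ⟨r • b 0, by simp [Basis.coord_apply]⟩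
    have := LinearMap.finrank_range_add_finrank_ker (b.coord 0)
    rw [LinearMap.range_eq_top.mpr hsurj] at this
    have hV : finrank ℝ V = m + 1 := by
      rw [finrank_eq_card_basis b, Fintype.card_fin]
    simp [finrank_top, hV] at this
    omega
  have hle := Submodule.finrank_le (P ⊔ LinearMap.ker (b.coord 0))
  have := Submodule.finrank_sup_add_finrank_inf_eq P (LinearMap.ker (b.coord 0))
  rw [hdisj] at this
  have hV : finrank ℝ V = m + 1 := by
    rw [finrank_eq_card_basis b, Fintype.card_fin]
  rw [hfinP, hfinN] at this
  simp [finrank_bot] at this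
  omega

end geom
end aux

open TensorProduct

set_option maxHeartbeats 1000000

/-- Let `h` be a parabolic isometry of `(V, q)`, where `q` is a
nondegenerate quadratic form of signature `(1, m)`, and let `W` be an `h`-invariant
subspace on which `q` restricts to a nondegenerate indefinite form.  Then the restriction
of `h` to `W` is a parabolic isometry of `(W, q|_W)`: it is bijective, preserves `q|_W`,
all eigenvalues of its complexification have modulus `1`, and its complexification is
not diagonalizable. -/
theorem parabolic_restricts_to_parabolic
    {V : Type*} [AddCommGroup V] [Module ℝ V] [FiniteDimensional ℝ V]
    (m : ℕ) (q : QuadraticForm ℝ V)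
    (b : Basis (Fin (m + 1)) ℝ V)
    (horth : ∀ i j, i ≠ j → QuadraticMap.polar q (b i) (b j) = 0)
    (hpos : 0 < q (b 0))
    (hneg : ∀ i : Fin (m + 1), i ≠ 0 → q (b i) < 0)
    (h : V →ₗ[ℝ] V) (hbij : Function.Bijective h)
    (hiso : ∀ v, q (h v) = q v)
    (heig : ∀ μ : ℂ, Module.End.HasEigenvalue (LinearMap.baseChange ℂ h) μ → ‖μ‖ = 1)
    (hnodiag : ¬ (⨆ μ : ℂ, Module.End.eigenspace (LinearMap.baseChange ℂ h) μ) = ⊤)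
    (W : Submodule ℝ V) (hW : ∀ x ∈ W, h x ∈ W)
    (hWnd : ∀ x ∈ W, (∀ y ∈ W, QuadraticMap.polar q x y = 0) → x = 0)
    (hWpos : ∃ x ∈ W, 0 < q x) (hWneg : ∃ y ∈ W, q y < 0) :
    Function.Bijective (h.restrict hW) ∧
    (∀ w : W, q ((h.restrict hW w : W) : V) = q (w : V)) ∧
    (∀ μ : ℂ, Module.End.HasEigenvalue (LinearMap.baseChange ℂ (h.restrict hW)) μ →
        ‖μ‖ = 1) ∧
    ¬ (⨆ μ : ℂ, Module.End.eigenspace (LinearMap.baseChange ℂ (h.restrict hW)) μ) = ⊤ := by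
  classical
  -- polar form invariance
  have hpol : ∀ u v, QuadraticMap.polar q (h u) (h v) = QuadraticMap.polar q u v := by
    intro u v
    unfold QuadraticMap.polar
    rw [← map_add h, hiso, hiso, hiso]
  -- bijectivity of restrictions to invariant subspaces
  have hrbij : ∀ (P : Submodule ℝ V) (hP : ∀ x ∈ P, h x ∈ P),
      Function.Bijective (h.restrict hP) := by
    intro P hP
    have hinj : Function.Injective (h.restrict hP) := by
      intro x y hxy
      apply Subtype.ext
      apply hbij.1
      have := congrArg (Subtype.val) hxy
      simpa using this
    exact ⟨hinj, (LinearMap.injective_iff_surjective).mp hinj⟩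
  refine ⟨hrbij W hW, ?_, ?_, ?_⟩
  · intro w
    simp [hiso]
  · intro μ hμ
    exact heig μ (aux_eig_transfer h W hW μ hμ)
  -- the hard part : non-diagonalizability
  intro Hsub
  apply hnodiag
  -- setup: the polar bilinear form and the orthogonal complement of W
  set B : LinearMap.BilinForm ℝ V := QuadraticMap.polarBilin q with hB
  have hBapp : ∀ u v, B u v = QuadraticMap.polar q u v := fun u v => rfl
  have hrefl : B.IsRefl := by
    intro u v huv
    rw [hBapp] at huv ⊢
    rw [QuadraticMap.polar_comm]
    exact huv
  have hndW : (B.restrict W).Nondegenerate := by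
    refine LinearMap.BilinForm.Nondegenerate.ofSeparatingLeft ?_
    intro x hx
    apply Subtype.ext
    apply hWnd x.1 x.2
    intro y hy
    have := hx ⟨y, hy⟩
    simpa [LinearMap.BilinForm.restrict_apply, hBapp] using this
  have hcompl : IsCompl W (B.orthogonal W) :=
    LinearMap.BilinForm.isCompl_orthogonal_of_restrict_nondegenerate hrefl hndW
  set W' : Submodule ℝ V := B.orthogonal W with hW'def
  have hmemW' : ∀ x, x ∈ W' ↔ ∀ w ∈ W, QuadraticMap.polar q w x = 0 := by
    intro x
    rfl
  -- h-invariance of W'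
  have hW' : ∀ x ∈ W', h x ∈ W' := by
    intro x hx
    rw [hmemW'] at hx ⊢
    intro w hw
    obtain ⟨⟨w₀, hw₀⟩, hww⟩ := (hrbij W hW).2 ⟨w, hw⟩
    have hww' : h w₀ = w := congrArg Subtype.val hww
    rw [← hww', hpol]
    exact hx w₀ hw₀
  -- q is negative semidefinite on W'
  obtain ⟨wp, hwpW, hwpq⟩ := hWpos
  have hsemineg : ∀ x ∈ W', q x ≤ 0 := by
    intro x hx
    by_contra hq
    push_neg at hq
    have hxw : QuadraticMap.polar q x wp = 0 := by
      rw [QuadraticMap.polar_comm]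
      exact (hmemW' x).mp hx wp hwpW
    have hli : LinearIndependent ℝ ![x, wp] := by
      rw [LinearIndependent.pair_iff]
      intro a c hac
      have hq0 : q (a • x + c • wp) = 0 := by rw [hac]; simp
      have hexp : q (a • x + c • wp) = a^2 * q x + c^2 * q wp := by
        have hpol2 : QuadraticMap.polar q (a • x) (c • wp) = 0 := by
          rw [QuadraticMap.polar_smul_left, QuadraticMap.polar_smul_right, hxw]
          simp
        have hdefp : QuadraticMap.polar q (a • x) (c • wp)
            = q (a • x + c • wp) - q (a • x) - q (c • wp) := rfl
        rw [hpol2] at hdefp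
        rw [QuadraticMap.map_smul, QuadraticMap.map_smul] at hdefp
        simp only [smul_eq_mul] at hdefp
        nlinarith [hdefp]
      rw [hexp] at hq0
      have t1 : 0 ≤ a^2 * q x := mul_nonneg (sq_nonneg a) hq.le
      have t2 : 0 ≤ c^2 * q wp := mul_nonneg (sq_nonneg c) hwpq.le
      have ha2 : a^2 * q x = 0 := by linarith
      have hc2 : c^2 * q wp = 0 := by linarith
      constructor
      · rcases mul_eq_zero.mp ha2 with h' | h'
        · exact sq_eq_zero_iff.mp h'
        · exact absurd h' (ne_of_gt hq)
      · rcases mul_eq_zero.mp hc2 with h' | h'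
        · exact sq_eq_zero_iff.mp h'
        · exact absurd h' (ne_of_gt hwpq)
    exact aux_L3 q b horth hpos hneg x wp hq hwpq hxw hli
  -- q is negative definite on W'
  have hne0 : ∀ i : Fin (m + 1), q (b i) ≠ 0 := by
    intro i
    rcases eq_or_ne i 0 with rfl | hi
    · exact ne_of_gt hpos
    · exact ne_of_lt (hneg i hi)
  have hnegdef : ∀ x ∈ W', x ≠ 0 → q x < 0 := by
    intro x hx hx0
    rcases lt_or_eq_of_le (hsemineg x hx) with hlt | heq0
    · exact hlt
    · exfalso
      apply hx0
      apply aux_qnondeg q b horth hne0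
      intro v
      have hv : v ∈ W ⊔ W' := by
        rw [hcompl.sup_eq_top]
        trivial
      obtain ⟨vw, hvw, vw', hvw', rfl⟩ := Submodule.mem_sup.mp hv
      have h1 : QuadraticMap.polar q x vw = 0 := by
        rw [QuadraticMap.polar_comm]
        exact (hmemW' x).mp hx vw hvw
      have h2 : QuadraticMap.polar q x vw' = 0 := by
        by_contra hp
        set p := QuadraticMap.polar q x vw' with hpdef
        set c := q vw' with hcdef
        have hc : c ≤ 0 := hsemineg vw' hvw'
        have hkey : ∀ t : ℝ, t * p + t^2 * c ≤ 0 := by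
          intro t
          have hmem : x + t • vw' ∈ W' := W'.add_mem hx (W'.smul_mem t hvw')
          have hle := hsemineg _ hmem
          have hdefp : QuadraticMap.polar q x (t • vw')
              = q (x + t • vw') - q x - q (t • vw') := rfl
          rw [QuadraticMap.polar_smul_right] at hdefp
          rw [QuadraticMap.map_smul] at hdefp
          simp only [smul_eq_mul] at hdefp
          rw [← heq0] at hle
          rw [pow_two]
          linarith [hdefp, hle, heq0]
        have ht := hkey (p / (2 * (1 - c)))
        have hd : (0:ℝ) < 1 - c := by linarith
        have hp2 : 0 < p^2 := by positivity
        have expand : p / (2 * (1 - c)) * p + (p / (2 * (1 - c)))^2 * c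
            = p^2 * (2 * (1 - c) + c) / (2 * (1 - c))^2 := by
          field_simp
        rw [expand] at ht
        have hnum : 0 < p^2 * (2 * (1 - c) + c) := by
          apply mul_pos hp2
          linarith
        have hden : 0 < (2 * (1 - c))^2 := by positivity
        have : 0 < p^2 * (2 * (1 - c) + c) / (2 * (1 - c))^2 := div_pos hnum hden
        linarith
      have hadd : QuadraticMap.polar q x (vw + vw')
          = QuadraticMap.polar q x vw + QuadraticMap.polar q x vw' :=
        QuadraticMap.polar_add_right q x vw vw'
      rw [hadd, h1, h2, add_zero]
  -- the bilinear form K on W'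
  set K : LinearMap.BilinForm ℝ ↥W' := -(B.restrict W') with hKdef
  have hKapp : ∀ u v : ↥W', K u v = -QuadraticMap.polar q u.1 v.1 := by
    intro u v
    simp [hKdef, LinearMap.BilinForm.restrict_apply, hBapp]
  have hKsymm : ∀ u v : ↥W', K u v = K v u := by
    intro u v
    rw [hKapp, hKapp, QuadraticMap.polar_comm]
  have hKpos : ∀ u : ↥W', u ≠ 0 → 0 < K u u := by
    intro u hu
    rw [hKapp]
    have hu' : (u : V) ≠ 0 := by
      simpa [Submodule.coe_eq_zero] using hu
    have := hnegdef u.1 u.2 hu'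
    rw [QuadraticMap.polar_self]
    rw [two_smul]
    linarith
  set g : ↥W' →ₗ[ℝ] ↥W' := h.restrict hW' with hgdef
  have hgK : ∀ u v : ↥W', K (g u) (g v) = K u v := by
    intro u v
    rw [hKapp, hKapp]
    have h1 : ((g u : ↥W') : V) = h u.1 := rfl
    have h2 : ((g v : ↥W') : V) = h v.1 := rfl
    rw [h1, h2, hpol]
  have hgeig : ∀ μ : ℂ, Module.End.HasEigenvalue (LinearMap.baseChange ℂ g) μ →
      ‖μ‖ = 1 := by
    intro μ hμ
    exact heig μ (aux_eig_transfer h W' hW' μ hμ)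
  have HW' : (⨆ μ : ℂ, Module.End.eigenspace (LinearMap.baseChange ℂ g) μ) = ⊤ :=
    aux_L4 K g hgK hKsymm hKpos hgeig
  -- combine: every element of ℂ ⊗ V is a sum of eigenvectors
  set S : Submodule ℂ (ℂ ⊗[ℝ] V) :=
    ⨆ μ : ℂ, Module.End.eigenspace (LinearMap.baseChange ℂ h) μ with hSdef
  have hsub : ∀ (P : Submodule ℝ V) (hP : ∀ x ∈ P, h x ∈ P),
      (⨆ μ : ℂ, Module.End.eigenspace (LinearMap.baseChange ℂ (h.restrict hP)) μ) = ⊤ →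
      ∀ u : ℂ ⊗[ℝ] ↥P, (LinearMap.baseChange ℂ P.subtype) u ∈ S := by
    intro P hP Hdiag u
    set ι := LinearMap.baseChange ℂ P.subtype with hι
    have hcomm : ∀ z, LinearMap.baseChange ℂ h (ι z)
        = ι (LinearMap.baseChange ℂ (h.restrict hP) z) := by
      intro z
      have : (LinearMap.baseChange ℂ h).comp ι
          = ι.comp (LinearMap.baseChange ℂ (h.restrict hP)) := by
        rw [hι, ← LinearMap.baseChange_comp, ← LinearMap.baseChange_comp]
        congr 1
      exact DFunLike.congr_fun this z
    have hu : u ∈ (⨆ μ : ℂ, Module.End.eigenspace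
        (LinearMap.baseChange ℂ (h.restrict hP)) μ) := by
      rw [Hdiag]; trivial
    have hmap : Submodule.map ι (⨆ μ : ℂ, Module.End.eigenspace
        (LinearMap.baseChange ℂ (h.restrict hP)) μ) ≤ S := by
      rw [Submodule.map_iSup]
      apply iSup_le
      intro μ
      refine le_trans ?_ (le_iSup _ μ)
      intro z hz
      obtain ⟨v, hv, rfl⟩ := hz
      have hv' : (LinearMap.baseChange ℂ (h.restrict hP)) v = μ • v :=
        Module.End.mem_eigenspace_iff.mp hv
      rw [Module.End.mem_eigenspace_iff, hcomm, hv', _root_.map_smul]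
    exact hmap ⟨u, hu, rfl⟩
  rw [eq_top_iff]
  intro z _
  have hz : ∀ z : ℂ ⊗[ℝ] V, z ∈ S := by
    intro z
    induction z using TensorProduct.induction_on with
    | zero => exact S.zero_mem
    | tmul c v =>
      have hv : v ∈ W ⊔ W' := by
        rw [hcompl.sup_eq_top]
        trivial
      obtain ⟨vw, hvw, vw', hvw', rfl⟩ := Submodule.mem_sup.mp hv
      rw [TensorProduct.tmul_add]
      apply S.add_mem
      · have := hsub W hW Hsub (c ⊗ₜ ⟨vw, hvw⟩)
        simpa using this
      · have := hsub W' hW' HW' (c ⊗ₜ ⟨vw', hvw'⟩)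
        simpa using this
    | add z₁ z₂ h₁ h₂ => exact S.add_mem h₁ h₂
  exact hz z
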